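/- Let A = ℝ[x,y] be the polynomial algebra in two variables and define the linear operator R on A by R(x^m y^n) = (m/(m+n))·x^{m+n} when m+n ≠ 0, and R(1) = 1. Then (A, R) is a Rota-Baxter algebra of weight -1: R(P)R(Q) = R(R(P)Q + P·R(Q) - PQ) for all P, Q ∈ A. -/

import Mathlib

open MvPolynomial

lemma mono_eq (s : Fin 2 →₀ ℕ) (r : ℝ) :
    (monomial s r : MvPolynomial (Fin 2) ℝ) = r • (X 0 ^ (s 0) * X 1 ^ (s 1)) := by
  have hs : s = Finsupp.single 0 (s 0) + Finsupp.single 1 (s 1) := by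
    ext i; fin_cases i <;> simp [Finsupp.single_apply]
  rw [X_pow_eq_monomial, X_pow_eq_monomial, monomial_mul, smul_monomial, mul_one, smul_eq_mul,
    mul_one, ← hs]

lemma key_lemma
    (R : MvPolynomial (Fin 2) ℝ →ₗ[ℝ] MvPolynomial (Fin 2) ℝ)
    (h1 : R 1 = 1)
    (hmon : ∀ m n : ℕ, m + n ≠ 0 →
      R (X 0 ^ m * X 1 ^ n) = ((m : ℝ) / ((m : ℝ) + n)) • (X 0 ^ (m + n)))
    (a b c d : ℕ) :
    R (X 0 ^ a * X 1 ^ b) * R (X 0 ^ c * X 1 ^ d)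
      = R (R (X 0 ^ a * X 1 ^ b) * (X 0 ^ c * X 1 ^ d)
          + (X 0 ^ a * X 1 ^ b) * R (X 0 ^ c * X 1 ^ d)
          - (X 0 ^ a * X 1 ^ b) * (X 0 ^ c * X 1 ^ d)) := by
  have RX : ∀ n : ℕ, n ≠ 0 → R (X 0 ^ n : MvPolynomial (Fin 2) ℝ) = X 0 ^ n := by
    intro n hn
    have := hmon n 0 (by simpa using hn)
    simp only [pow_zero, mul_one, add_zero, Nat.cast_zero] at this
    rw [this, div_self (by exact_mod_cast hn), one_smul]
  by_cases hs : a + b = 0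
  · obtain ⟨ha, hb⟩ := Nat.add_eq_zero.mp hs
    subst ha; subst hb
    by_cases ht : c + d = 0
    · obtain ⟨hc, hd⟩ := Nat.add_eq_zero.mp ht
      subst hc; subst hd
      simp [h1]
    · simp only [pow_zero, one_mul, mul_one, h1]
      rw [hmon c d ht, add_sub_cancel_left, map_smul, RX (c + d) ht]
  · by_cases ht : c + d = 0
    · obtain ⟨hc, hd⟩ := Nat.add_eq_zero.mp ht
      subst hc; subst hd
      simp only [pow_zero, one_mul, mul_one, h1]
      rw [hmon a b hs, add_sub_cancel_right, map_smul, RX (a + b) hs]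
    · -- main case
      have hsR : ((a : ℝ) + b) ≠ 0 := by
        exact_mod_cast (show ((a + b : ℕ) : ℝ) ≠ 0 by exact_mod_cast hs)
      have htR : ((c : ℝ) + d) ≠ 0 := by
        exact_mod_cast (show ((c + d : ℕ) : ℝ) ≠ 0 by exact_mod_cast ht)
      have hst : a + b + c + d ≠ 0 := by omega
      have hstR : ((a : ℝ) + b + c + d) ≠ 0 := by
        exact_mod_cast (show ((a + b + c + d : ℕ) : ℝ) ≠ 0 by exact_mod_cast hst)
      rw [hmon a b hs, hmon c d ht]
      have hin : (((a : ℝ) / ((a : ℝ) + b)) • (X 0 ^ (a + b)) * (X 0 ^ c * X 1 ^ d)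
            + (X 0 ^ a * X 1 ^ b) * (((c : ℝ) / ((c : ℝ) + d)) • (X 0 ^ (c + d)))
            - (X 0 ^ a * X 1 ^ b) * (X 0 ^ c * X 1 ^ d) : MvPolynomial (Fin 2) ℝ)
          = ((a : ℝ) / ((a : ℝ) + b)) • (X 0 ^ (a + b + c) * X 1 ^ d)
            + ((c : ℝ) / ((c : ℝ) + d)) • (X 0 ^ (a + c + d) * X 1 ^ b)
            - X 0 ^ (a + c) * X 1 ^ (b + d) := by
        simp only [smul_eq_C_mul]; ring
      rw [hin, map_sub, map_add, map_smul, map_smul,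
        hmon (a + b + c) d (by omega), hmon (a + c + d) b (by omega),
        hmon (a + c) (b + d) (by omega),
        show a + c + d + b = a + b + c + d by omega,
        show a + c + (b + d) = a + b + c + d by omega,
        smul_mul_smul_comm, ← pow_add,
        show a + b + (c + d) = a + b + c + d by omega,
        smul_smul, smul_smul, ← add_smul, ← sub_smul]
      congr 1
      push_cast
      rw [show ((a : ℝ) + c + d + b) = (a : ℝ) + b + c + d by ring,
        show ((a : ℝ) + c + ((b : ℝ) + d)) = (a : ℝ) + b + c + d by ring]
      field_simp
      ring

theorem organic_rota_baxter
    (R : MvPolynomial (Fin 2) ℝ →ₗ[ℝ] MvPolynomial (Fin 2) ℝ)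
    (h1 : R 1 = 1)
    (hmon : ∀ m n : ℕ, m + n ≠ 0 →
      R (X 0 ^ m * X 1 ^ n) = ((m : ℝ) / ((m : ℝ) + n)) • (X 0 ^ (m + n))) :
    ∀ P Q : MvPolynomial (Fin 2) ℝ,
      R P * R Q = R (R P * Q + P * R Q - P * Q) := by
  intro P Q
  induction P using MvPolynomial.induction_on' with
  | add p1 p2 ih1 ih2 =>
    have h : R (p1 + p2) * Q + (p1 + p2) * R Q - (p1 + p2) * Q
        = (R p1 * Q + p1 * R Q - p1 * Q) + (R p2 * Q + p2 * R Q - p2 * Q) := by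
      rw [map_add]; ring
    rw [h, map_add, map_add, ← ih1, ← ih2, add_mul]
  | monomial s r =>
    induction Q using MvPolynomial.induction_on' with
    | add q1 q2 ih1 ih2 =>
      have h : R (monomial s r) * (q1 + q2) + (monomial s r) * R (q1 + q2)
            - (monomial s r) * (q1 + q2)
          = (R (monomial s r) * q1 + (monomial s r) * R q1 - (monomial s r) * q1)
            + (R (monomial s r) * q2 + (monomial s r) * R q2 - (monomial s r) * q2) := by
        rw [map_add]; ring
      rw [h, map_add, map_add, ← ih1, ← ih2, mul_add]
    | monomial t u =>
      rw [mono_eq s r, mono_eq t u]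
      simp only [map_smul, smul_mul_smul_comm]
      rw [← smul_add, ← smul_sub, map_smul, key_lemma R h1 hmon (s 0) (s 1) (t 0) (t 1)]
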